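/- Let n ≥ 2 be an integer, z ∈ ℂ with |z| > 1, and s ∈ ℂ with s·(1 − z) ∈ {0,1,…,n−1}. Define A_s = ⋃_{k≥0} ( s·z^k + { ∑_{i=0}^{k−1} a_i z^i : each a_i ∈ {0,1,…,n−1} } ). Then A_s satisfies the same selfsimilarity equation as the integer part: z·A_s + {0,1,…,n−1} = A_s, i.e., ⋃_{i=0}^{n−1}(z·A_s + i) = A_s. -/

import Mathlib

/-- The attractor `A_s`: the union over `k` of `s·z^k + {∑_{i<k} a_i z^i : a_i < n}`. -/
def Aset (n : ℕ) (z : ℂ) (s : ℂ) : Set ℂ :=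
  { x | ∃ k : ℕ, ∃ a : ℕ → ℕ, (∀ i, a i < n) ∧
      x = s * z ^ k + ∑ i ∈ Finset.range k, (a i : ℂ) * z ^ i }

theorem stmt_15 (n : ℕ) (hn : 2 ≤ n) (z : ℂ) (hz : 1 < ‖z‖)
    (s : ℂ) (hs : ∃ e : ℕ, e < n ∧ s * (1 - z) = (e : ℂ)) :
    ⋃ i ∈ Finset.range n, (fun x => z * x + (i : ℂ)) '' Aset n z s = Aset n z s := by
  obtain ⟨e, he, hse⟩ := hs
  have hszs : s = z * s + (e : ℂ) := by linear_combination hse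
  have key : ∀ (k : ℕ) (a : ℕ → ℕ), z * ∑ i ∈ Finset.range k, (a i : ℂ) * z ^ i
      = ∑ i ∈ Finset.range k, (a i : ℂ) * z ^ (i + 1) := fun k a => by
    rw [Finset.mul_sum]; exact Finset.sum_congr rfl fun i _ => by ring
  ext x
  simp only [Set.mem_iUnion, Set.mem_image, Finset.mem_range]
  constructor
  · rintro ⟨j, hj, y, ⟨k, a, ha, rfl⟩, rfl⟩
    refine ⟨k + 1, fun i => if i = 0 then j else a (i - 1), fun i => by
      dsimp only; split <;> [exact hj; exact ha _], ?_⟩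
    rw [Finset.sum_range_succ']
    simp only [Nat.add_sub_cancel, if_neg (Nat.succ_ne_zero _), if_pos rfl]
    rw [mul_add, key]
    ring_nf
    simp only [if_true, Nat.cast_inj, mul_one]
  · rintro ⟨k, a, ha, rfl⟩
    cases k with
    | zero =>
      refine ⟨e, he, s, ⟨0, a, ha, by simp⟩, ?_⟩
      simp
      linear_combination -hszs
    | succ m =>
      refine ⟨a 0, ha 0, s * z ^ m + ∑ i ∈ Finset.range m, ((a (i+1) : ℂ)) * z ^ i,
        ⟨m, fun i => a (i + 1), fun i => ha _, rfl⟩, ?_⟩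
      rw [Finset.sum_range_succ', mul_add, key]
      ring
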